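/- Let γ ∈ [0,1), K ≥ 1, and w ∈ ℝ^K a nonnegative weight vector summing to one. Then ∑_{ℓ=0}^{K−1} ( ∑_{k=ℓ+1}^{K} w_k γ^k )^2 ≤ γ(1−γ̄)/(1−γ), where γ̄ = ∑_{k=1}^K w_k γ^k. -/

import Mathlib

open Finset

/-- `∑_{ℓ=0}^{K-1} (∑_{k=ℓ+1}^K wₖ γᵏ)² ≤ γ (1 - γ̄)/(1 - γ)` for a
probability weight vector `w` and `γ ∈ [0,1)`, with `γ̄ = ∑ₖ wₖ γᵏ`. -/
theorem stmt1 (γ : ℝ) (hγ0 : 0 ≤ γ) (hγ1 : γ < 1) (K : ℕ) (hK : 1 ≤ K)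
    (w : ℕ → ℝ) (hw0 : ∀ k ∈ Icc 1 K, 0 ≤ w k) (hw1 : ∑ k ∈ Icc 1 K, w k = 1) :
    ∑ ℓ ∈ range K, (∑ k ∈ Icc (ℓ + 1) K, w k * γ ^ k) ^ 2
      ≤ γ * (1 - ∑ k ∈ Icc 1 K, w k * γ ^ k) / (1 - γ) := by
  have h1γ : (0:ℝ) < 1 - γ := by linarith
  have hterm : ∀ k ∈ Icc 1 K, 0 ≤ w k * γ ^ k := fun k hk =>
    mul_nonneg (hw0 k hk) (pow_nonneg hγ0 k)
  have hS0 : ∀ ℓ, 0 ≤ ∑ k ∈ Icc (ℓ + 1) K, w k * γ ^ k := by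
    intro ℓ
    refine Finset.sum_nonneg fun k hk => ?_
    have hk' := Finset.mem_Icc.mp hk
    exact hterm k (Finset.mem_Icc.mpr ⟨by omega, hk'.2⟩)
  have hS1 : ∀ ℓ, (∑ k ∈ Icc (ℓ + 1) K, w k * γ ^ k) ≤ 1 := by
    intro ℓ
    calc ∑ k ∈ Icc (ℓ + 1) K, w k * γ ^ k
        ≤ ∑ k ∈ Icc 1 K, w k * γ ^ k :=
          Finset.sum_le_sum_of_subset_of_nonneg
            (Finset.Icc_subset_Icc (by omega) le_rfl) (fun k hk _ => hterm k hk)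
      _ ≤ ∑ k ∈ Icc 1 K, w k := Finset.sum_le_sum (fun k hk =>
          mul_le_of_le_one_right (hw0 k hk) (pow_le_one₀ hγ0 hγ1.le))
      _ = 1 := hw1
  have step1 : ∑ ℓ ∈ range K, (∑ k ∈ Icc (ℓ + 1) K, w k * γ ^ k) ^ 2
      ≤ ∑ ℓ ∈ range K, ∑ k ∈ Icc (ℓ + 1) K, w k * γ ^ k := by
    refine Finset.sum_le_sum fun ℓ _ => ?_
    have h0 := hS0 ℓ; have h1 := hS1 ℓ
    nlinarith
  have swap : ∑ ℓ ∈ range K, ∑ k ∈ Icc (ℓ + 1) K, w k * γ ^ k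
      = ∑ k ∈ Icc 1 K, (k : ℝ) * (w k * γ ^ k) := by
    rw [Finset.sum_comm' (t' := Icc 1 K) (s' := fun k => range k)
      (by intro ℓ k; simp only [Finset.mem_range, Finset.mem_Icc]; omega)]
    refine Finset.sum_congr rfl fun k _ => ?_
    simp [Finset.sum_const, mul_comm]
  -- key pointwise bound : k γ^k (1-γ) ≤ γ (1 - γ^k)
  have key : ∀ k : ℕ, (k : ℝ) * γ ^ k * (1 - γ) ≤ γ * (1 - γ ^ k) := by
    intro k
    induction k with
    | zero => simp
    | succ n ih =>
      have hg : γ ^ (n + 1) ≤ γ := by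
        calc γ ^ (n + 1) ≤ γ ^ 1 := pow_le_pow_of_le_one hγ0 hγ1.le (by omega)
          _ = γ := pow_one γ
      have hgn : 0 ≤ γ ^ n := pow_nonneg hγ0 n
      have hp : γ ^ (n + 1) = γ * γ ^ n := by rw [pow_succ]; ring
      push_cast
      rw [hp]
      nlinarith [mul_le_mul_of_nonneg_left ih hγ0,
        mul_le_mul_of_nonneg_right hg h1γ.le]
  have step2 : ∑ k ∈ Icc 1 K, (k : ℝ) * (w k * γ ^ k)
      ≤ γ * (1 - ∑ k ∈ Icc 1 K, w k * γ ^ k) / (1 - γ) := by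
    have : ∑ k ∈ Icc 1 K, (k : ℝ) * (w k * γ ^ k)
        ≤ ∑ k ∈ Icc 1 K, w k * (γ * (1 - γ ^ k) / (1 - γ)) := by
      refine Finset.sum_le_sum fun k hk => ?_
      have hk0 := hw0 k hk
      have : (k : ℝ) * γ ^ k ≤ γ * (1 - γ ^ k) / (1 - γ) := by
        rw [le_div_iff₀ h1γ]; nlinarith [key k]
      calc (k : ℝ) * (w k * γ ^ k) = w k * ((k:ℝ) * γ ^ k) := by ring
        _ ≤ w k * (γ * (1 - γ ^ k) / (1 - γ)) := mul_le_mul_of_nonneg_left this hk0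
    refine this.trans_eq ?_
    rw [eq_div_iff h1γ.ne', Finset.sum_mul]
    have expand : ∀ k ∈ Icc 1 K,
        w k * (γ * (1 - γ ^ k) / (1 - γ)) * (1 - γ) = γ * w k - γ * (w k * γ ^ k) := by
      intro k _; field_simp
    rw [Finset.sum_congr rfl expand, Finset.sum_sub_distrib, ← Finset.mul_sum,
      ← Finset.mul_sum, hw1]
    ring
  calc ∑ ℓ ∈ range K, (∑ k ∈ Icc (ℓ + 1) K, w k * γ ^ k) ^ 2
      ≤ ∑ ℓ ∈ range K, ∑ k ∈ Icc (ℓ + 1) K, w k * γ ^ k := step1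
    _ = ∑ k ∈ Icc 1 K, (k : ℝ) * (w k * γ ^ k) := swap
    _ ≤ _ := step2
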